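/- Let (Ω, 𝓕, P) be a probability space, 1 < b ≤ ∞, ψ : [1,b) → (0,∞), and let ζ be a real random variable with ‖ζ‖ := sup_{p ∈ [1,b)} (E|ζ|^p)^{1/p} / ψ(p) ∈ (0,∞). Define v_ψ(p) := p·ln ψ(p) for p ∈ [1,b), and let v_ψ*(y) := sup_{p ∈ [1,b)} ( p·y − v_ψ(p) ) be its Young–Fenchel (Legendre) transform. Then for every y ≥ e·‖ζ‖, P( |ζ| > y ) ≤ exp( − v_ψ*( ln( y / ‖ζ‖ ) ) ). -/

import Mathlib

open MeasureTheory Set Filter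
open scoped ENNReal

noncomputable section

/-- The Grand Lebesgue Space norm `‖ζ‖_{Gψ} = sup_{p ∈ [1,b)} (E|ζ|^p)^{1/p} / ψ(p)`,
computed in `[0,∞]`; here `b ∈ (1,∞]` is encoded as an element of `ℝ≥0∞`. -/
def glsNorm {Ω : Type*} [MeasurableSpace Ω] (P : Measure Ω) (b : ℝ≥0∞)
    (ψ : ℝ → ℝ) (ζ : Ω → ℝ) : ℝ≥0∞ :=
  ⨆ p ∈ {p : ℝ | 1 ≤ p ∧ ENNReal.ofReal p < b},
    (∫⁻ ω, ENNReal.ofReal (|ζ ω| ^ p) ∂P) ^ (1 / p) / ENNReal.ofReal (ψ p)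

/-- The Young–Fenchel (Legendre) transform `v_ψ*(y) = sup_{p ∈ [1,b)} ( p·y − v_ψ(p) )`
of `v_ψ(p) = p·ln ψ(p)`. -/
def youngFenchel (b : ℝ≥0∞) (ψ : ℝ → ℝ) (y : ℝ) : ℝ :=
  sSup {w : ℝ | ∃ p : ℝ, 1 ≤ p ∧ ENNReal.ofReal p < b ∧
    w = p * y - p * Real.log (ψ p)}

/-- Exponential tail estimate for a random variable with finite positive
Grand Lebesgue Space norm:
`P(|ζ| > y) ≤ exp( −v_ψ*( ln(y/‖ζ‖) ) )` for `y ≥ e·‖ζ‖`. -/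
theorem GLS_tail_estimate
    {Ω : Type*} [MeasurableSpace Ω] (P : Measure Ω) [IsProbabilityMeasure P]
    (b : ℝ≥0∞) (hb : 1 < b)
    (ψ : ℝ → ℝ) (hψpos : ∀ p : ℝ, 1 ≤ p → ENNReal.ofReal p < b → 0 < ψ p)
    (ζ : Ω → ℝ) (hζ : Measurable ζ)
    (hpos : 0 < glsNorm P b ψ ζ) (hfin : glsNorm P b ψ ζ ≠ ∞) :
    ∀ y : ℝ, Real.exp 1 * (glsNorm P b ψ ζ).toReal ≤ y →
      P {ω | y < |ζ ω|} ≤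
        ENNReal.ofReal
          (Real.exp (-(youngFenchel b ψ (Real.log (y / (glsNorm P b ψ ζ).toReal))))) := by

  intro y hy
  set G := glsNorm P b ψ ζ with hG
  have hN0 : 0 < G.toReal := ENNReal.toReal_pos hpos.ne' hfin
  have hy0 : 0 < y := lt_of_lt_of_le (by positivity) hy
  set N := G.toReal with hN
  set u := Real.log (y / N) with hu
  have key : ∀ p : ℝ, 1 ≤ p → ENNReal.ofReal p < b →
      (P {ω | y < |ζ ω|}).toReal ≤ Real.exp (-(p * u - p * Real.log (ψ p))) := by
    intro p hp1 hpb
    have hp0 : (0:ℝ) < p := lt_of_lt_of_le one_pos hp1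
    have hψ : 0 < ψ p := hψpos p hp1 hpb
    have h1 : (∫⁻ ω, ENNReal.ofReal (|ζ ω| ^ p) ∂P) ^ (1 / p) / ENNReal.ofReal (ψ p) ≤ G := by
      rw [hG, glsNorm]
      exact le_biSup
        (fun p => (∫⁻ ω, ENNReal.ofReal (|ζ ω| ^ p) ∂P) ^ (1 / p) / ENNReal.ofReal (ψ p))
        (show p ∈ {p : ℝ | 1 ≤ p ∧ ENNReal.ofReal p < b} from ⟨hp1, hpb⟩)
    have h2 : (∫⁻ ω, ENNReal.ofReal (|ζ ω| ^ p) ∂P) ^ (1 / p)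
        ≤ G * ENNReal.ofReal (ψ p) := by
      rwa [ENNReal.div_le_iff (by simp [hψ.ne', ENNReal.ofReal_eq_zero, not_le, hψ])
        ENNReal.ofReal_ne_top] at h1
    have h3 : (∫⁻ ω, ENNReal.ofReal (|ζ ω| ^ p) ∂P) ≤ (G * ENNReal.ofReal (ψ p)) ^ p := by
      calc (∫⁻ ω, ENNReal.ofReal (|ζ ω| ^ p) ∂P)
          = ((∫⁻ ω, ENNReal.ofReal (|ζ ω| ^ p) ∂P) ^ (1 / p)) ^ p := by
            rw [← ENNReal.rpow_mul, one_div, inv_mul_cancel₀ hp0.ne', ENNReal.rpow_one]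
        _ ≤ _ := ENNReal.rpow_le_rpow h2 hp0.le
    have hynz : ENNReal.ofReal (y ^ p) ≠ 0 := by
      simp [ENNReal.ofReal_eq_zero, not_le, Real.rpow_pos_of_pos hy0]
    have hmeas : P {ω | y < |ζ ω|}
        ≤ (∫⁻ ω, ENNReal.ofReal (|ζ ω| ^ p) ∂P) / ENNReal.ofReal (y ^ p) := by
      rw [ENNReal.le_div_iff_mul_le (Or.inl hynz) (Or.inl ENNReal.ofReal_ne_top), mul_comm]
      refine le_trans ?_ (mul_meas_ge_le_lintegral₀
        ((hζ.abs.pow_const p).ennreal_ofReal.aemeasurable) (ENNReal.ofReal (y ^ p)))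
      gcongr
      intro hω
      exact ENNReal.ofReal_le_ofReal
        (Real.rpow_le_rpow hy0.le (le_of_lt hω) hp0.le)
    have h4 : P {ω | y < |ζ ω|} ≤ (G * ENNReal.ofReal (ψ p)) ^ p / ENNReal.ofReal (y ^ p) :=
      hmeas.trans (ENNReal.div_le_div_right h3 _)
    have hfin2 : (G * ENNReal.ofReal (ψ p)) ^ p / ENNReal.ofReal (y ^ p) ≠ ∞ := by
      exact (ENNReal.div_lt_top
        (ENNReal.rpow_ne_top_of_nonneg hp0.le (ENNReal.mul_ne_top hfin ENNReal.ofReal_ne_top))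
        hynz).ne
    have h5 := (ENNReal.toReal_le_toReal (measure_ne_top P _) hfin2).2 h4
    have h6 : ((G * ENNReal.ofReal (ψ p)) ^ p / ENNReal.ofReal (y ^ p)).toReal
        = (N * ψ p) ^ p / y ^ p := by
      rw [ENNReal.toReal_div, ← ENNReal.toReal_rpow, ENNReal.toReal_mul,
        ENNReal.toReal_ofReal hψ.le, ENNReal.toReal_ofReal (Real.rpow_pos_of_pos hy0 p).le]
    have h7 : (N * ψ p) ^ p / y ^ p = Real.exp (-(p * u - p * Real.log (ψ p))) := by
      rw [← Real.div_rpow (by positivity) hy0.le,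
        Real.rpow_def_of_pos (by positivity)]
      congr 1
      rw [Real.log_div (by positivity) hy0.ne', Real.log_mul hN0.ne' hψ.ne', hu,
        Real.log_div hy0.ne' hN0.ne']
      ring
    rw [h6, h7] at h5
    exact h5
  rcases eq_or_ne (P {ω | y < |ζ ω|}) 0 with h0 | h0
  · rw [h0]; exact zero_le
  · have hPt : 0 < (P {ω | y < |ζ ω|}).toReal :=
      ENNReal.toReal_pos h0 (measure_ne_top P _)
    have hub : youngFenchel b ψ u ≤ -Real.log (P {ω | y < |ζ ω|}).toReal := by
      apply csSup_le
      · exact ⟨1 * u - 1 * Real.log (ψ 1), 1, le_refl 1, by simpa using hb, rfl⟩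
      · rintro w ⟨p, hp1, hpb, rfl⟩
        have hk := key p hp1 hpb
        have := Real.log_le_log hPt hk
        rw [Real.log_exp] at this
        linarith
    have hfinal : (P {ω | y < |ζ ω|}).toReal ≤ Real.exp (-(youngFenchel b ψ u)) := by
      calc (P {ω | y < |ζ ω|}).toReal
          = Real.exp (Real.log (P {ω | y < |ζ ω|}).toReal) := (Real.exp_log hPt).symm
        _ ≤ _ := Real.exp_le_exp.2 (by linarith)
    calc P {ω | y < |ζ ω|} = ENNReal.ofReal (P {ω | y < |ζ ω|}).toReal :=
        (ENNReal.ofReal_toReal (measure_ne_top P _)).symm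
      _ ≤ _ := ENNReal.ofReal_le_ofReal hfinal


end
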